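/- Let α > 0, 0 < β < 1 and γ, δ be real. Then for every t > 0, the function s ↦ s^{1−β} E_{α,2−β}^{−γ}(δ s^α) is differentiable at t with derivative t^{−β} E_{α,1−β}^{−γ}(δ t^α). Consequently, the Riemann–Liouville-type Prabhakar derivative of the constant function 1, namely d/dt ∫₀ᵗ (t−s)^{−β} E_{α,1−β}^{−γ}(δ(t−s)^α) ds, equals t^{−β} E_{α,1−β}^{−γ}(δ t^α) for t > 0. -/

import Mathlib

/-- The three-parameter Mittag-Leffler (Prabhakar) function
`E_{α,β}^{γ}(z) = ∑_{k=0}^∞ (γ)_k z^k / (Γ(αk+β) k!)`. -/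
noncomputable def prabE (α β γ z : ℝ) : ℝ :=
  ∑' k : ℕ, (ascPochhammer ℝ k).eval γ * z ^ k /
    (Real.Gamma (α * k + β) * (k.factorial : ℝ))

section PrabhakarAux
open Real MeasureTheory Set


lemma gamma_lb (C : ℝ) (hC : 1 ≤ C) (x : ℝ) (hx : 1 ≤ x) :
    Real.exp (-(2*C)) * C ^ (x-1) ≤ Real.Gamma x := by
  have hC0 : (0:ℝ) < C := lt_of_lt_of_le one_pos hC
  rw [Real.Gamma_eq_integral (by linarith)]
  have hint : IntegrableOn (fun t : ℝ => Real.exp (-t) * t ^ (x-1)) (Ioi 0) :=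
    Real.GammaIntegral_convergent (by linarith)
  have h1 : Real.exp (-(2*C)) * C ^ (x-1) ≤ ∫ t in Ioc C (2*C), Real.exp (-t) * t ^ (x-1) := by
    have hsub : Ioc C (2*C) ⊆ Ioi (0:ℝ) := fun y hy => lt_trans hC0 hy.1
    have h2 : ∫ t in Ioc C (2*C), (Real.exp (-(2*C)) * C ^ (x-1)) ≤
        ∫ t in Ioc C (2*C), Real.exp (-t) * t ^ (x-1) := by
      apply setIntegral_mono_on (integrableOn_const measure_Ioc_lt_top.ne)
        (hint.mono_set hsub) measurableSet_Ioc
      intro y hy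
      have hy0 : 0 < y := lt_trans hC0 hy.1
      apply mul_le_mul (Real.exp_le_exp.2 (by linarith [hy.2])) ?_
        (Real.rpow_nonneg hC0.le _) (Real.exp_pos _).le
      exact Real.rpow_le_rpow hC0.le hy.1.le (by linarith)
    calc Real.exp (-(2*C)) * C ^ (x-1)
        ≤ C * (Real.exp (-(2*C)) * C ^ (x-1)) := by
          nlinarith [Real.exp_pos (-(2*C)), Real.rpow_nonneg hC0.le (x-1),
            mul_pos (Real.exp_pos (-(2*C))) (Real.rpow_pos_of_pos hC0 (x-1))]
      _ = ∫ t in Ioc C (2*C), (Real.exp (-(2*C)) * C ^ (x-1)) := by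
          rw [setIntegral_const, measureReal_def, Real.volume_Ioc, smul_eq_mul]
          congr 1
          rw [ENNReal.toReal_ofReal (by linarith)]
          ring
      _ ≤ _ := h2
  refine le_trans h1 ?_
  apply setIntegral_mono_set hint ?_ ?_
  · refine Filter.Eventually.mono (MeasureTheory.self_mem_ae_restrict measurableSet_Ioi) ?_
    intro y hy
    simp only [Pi.zero_apply]
    exact mul_nonneg (Real.exp_pos _).le (Real.rpow_nonneg (le_of_lt hy) _)
  · filter_upwards [] with y hy using lt_trans hC0 hy.1


lemma poch_abs_le (x : ℝ) (k : ℕ) : |(ascPochhammer ℝ k).eval x| ≤ (|x| + k) ^ k := by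
  induction k with
  | zero => simp
  | succ n ih =>
    rw [ascPochhammer_succ_eval, abs_mul]
    have h1 : |x + (n:ℝ)| ≤ |x| + n := (abs_add_le _ _).trans (by simp)
    have h2 : (|x| + (n:ℝ)) ≤ |x| + (n+1:ℕ) := by push_cast; linarith
    calc |(ascPochhammer ℝ n).eval x| * |x + (n:ℝ)| ≤ (|x| + n) ^ n * (|x| + n) := by
          apply mul_le_mul ih h1 (abs_nonneg _) (by positivity)
      _ ≤ (|x| + (n+1:ℕ)) ^ n * (|x| + (n+1:ℕ)) := by
          apply mul_le_mul (pow_le_pow_left₀ (by positivity) h2 n) h2 (by positivity) (by positivity)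
      _ = (|x| + (n+1:ℕ)) ^ (n+1) := by rw [pow_succ]

lemma pow_le_exp_mul_factorial (k : ℕ) :
    ((k:ℝ) + 1) ^ k ≤ Real.exp ((k:ℝ)+1) * k.factorial := by
  have hx : (0:ℝ) < (k:ℝ) + 1 := by positivity
  have h := Real.sum_le_exp_of_nonneg hx.le (k+2)
  have h1 : ((k:ℝ)+1) ^ (k+1) / (k+1).factorial ≤ Real.exp ((k:ℝ)+1) := by
    refine le_trans ?_ h
    exact Finset.single_le_sum (f := fun i => ((k:ℝ)+1)^i / i.factorial)
      (fun i _ => by positivity) (Finset.self_mem_range_succ (k+1))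
  have h2 : ((k:ℝ)+1) ^ (k+1) ≤ Real.exp ((k:ℝ)+1) * (k+1).factorial := by
    rw [div_le_iff₀ (by positivity)] at h1; exact h1
  have h3 : ((k+1).factorial : ℝ) = ((k:ℝ)+1) * k.factorial := by
    rw [Nat.factorial_succ]; push_cast; ring
  rw [pow_succ, h3] at h2
  nlinarith [Real.exp_pos ((k:ℝ)+1), (Nat.cast_pos (α := ℝ)).2 k.factorial_pos]

lemma poch_fact_bound (γ : ℝ) (m : ℕ) :
    |(ascPochhammer ℝ m).eval (-γ)| ≤
      Real.exp 1 * (Real.exp 1 * (|γ| + 1)) ^ m * m.factorial := by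
  have h1 : |(ascPochhammer ℝ m).eval (-γ)| ≤ (|γ| + m) ^ m := by
    simpa [abs_neg] using poch_abs_le (-γ) m
  have h2 : (|γ| + (m:ℝ)) ≤ (|γ| + 1) * ((m:ℝ) + 1) := by
    nlinarith [abs_nonneg γ, Nat.cast_nonneg (α := ℝ) m]
  have h3 : (|γ| + (m:ℝ)) ^ m ≤ ((|γ| + 1) * ((m:ℝ)+1)) ^ m :=
    pow_le_pow_left₀ (by positivity) h2 m
  have h4 : ((|γ| + 1) * ((m:ℝ)+1)) ^ m = (|γ|+1)^m * ((m:ℝ)+1)^m := mul_pow _ _ _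
  have h5 : ((m:ℝ)+1)^m ≤ Real.exp ((m:ℝ)+1) * m.factorial := pow_le_exp_mul_factorial m
  have h6 : Real.exp ((m:ℝ)+1) = Real.exp 1 * (Real.exp 1)^m := by
    rw [Real.exp_one_pow, ← Real.exp_add]
    ring_nf
  calc |(ascPochhammer ℝ m).eval (-γ)| ≤ (|γ| + m) ^ m := h1
    _ ≤ (|γ|+1)^m * ((m:ℝ)+1)^m := by rw [← h4]; exact h3
    _ ≤ (|γ|+1)^m * (Real.exp ((m:ℝ)+1) * m.factorial) := by
        apply mul_le_mul_of_nonneg_left h5 (by positivity)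
    _ = Real.exp 1 * (Real.exp 1 * (|γ| + 1)) ^ m * m.factorial := by
        rw [h6, mul_pow]; ring

lemma main_summable (α γ : ℝ) (hα : 0 < α) (c : ℝ) (hc : 0 < c) (A : ℝ) (hA : 0 ≤ A) :
    Summable (fun k : ℕ => |(ascPochhammer ℝ k).eval (-γ)| * A ^ k * (α * k + 2) /
      (Real.Gamma (α * k + c) * (k.factorial : ℝ))) := by
  set G : ℝ := |γ| + 1 with hGdef
  have hG0 : 0 < G := by positivity
  set B : ℝ := Real.exp 1 * G * A with hBdef
  have hB0 : 0 ≤ B := by positivity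
  set C : ℝ := max 1 ((2*B+1) ^ (α⁻¹)) with hCdef
  have hC1 : 1 ≤ C := le_max_left _ _
  have hC0 : (0:ℝ) < C := lt_of_lt_of_le one_pos hC1
  have hCα : 2*B+1 ≤ C ^ α := by
    have h : ((2*B+1) ^ (α⁻¹)) ^ α = 2*B+1 := by
      rw [← Real.rpow_mul (by positivity), inv_mul_cancel₀ hα.ne', Real.rpow_one]
    rw [← h]
    exact Real.rpow_le_rpow (by positivity) (le_max_right _ _) hα.le
  have hCα0 : (0:ℝ) < C ^ α := Real.rpow_pos_of_pos hC0 α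
  set q : ℝ := B / C ^ α with hqdef
  have hq0 : 0 ≤ q := by positivity
  have hq1 : q < 1 := by rw [hqdef, div_lt_one hCα0]; linarith
  set K : ℕ := ⌈α⁻¹⌉₊ with hKdef
  have hK1 : (1:ℝ) ≤ α * K := by
    have h := Nat.le_ceil (α⁻¹)
    calc (1:ℝ) = α * α⁻¹ := (mul_inv_cancel₀ hα.ne').symm
      _ ≤ α * K := mul_le_mul_of_nonneg_left h hα.le
  rw [← summable_nat_add_iff K]
  -- summable bound
  have hu : Summable (fun k : ℕ =>
      (Real.exp 1 * Real.exp (2*C) * B^K) * ((α * k + (α*K+2)) * q ^ k)) := by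
    apply Summable.mul_left
    have h1 : Summable (fun k : ℕ => (k:ℝ) * q^k) := by
      have h := summable_pow_mul_geometric_of_norm_lt_one 1
        (r := q) (by rwa [Real.norm_eq_abs, abs_of_nonneg hq0])
      simpa using h
    have h2 : Summable (fun k : ℕ => q^k) := summable_geometric_of_lt_one hq0 hq1
    apply ((h1.mul_left α).add (h2.mul_left (α*K+2))).congr
    intro k; ring
  apply Summable.of_nonneg_of_le _ _ hu
  · intro k
    have hg : 0 < Real.Gamma (α * (k+K) + c) := Real.Gamma_pos_of_pos (by positivity)
    have : (0:ℝ) < (k+K).factorial := by exact_mod_cast (k+K).factorial_pos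
    positivity
  · intro k
    set m : ℕ := k + K with hmdef
    have hmc : ((m:ℕ):ℝ) = (k:ℝ) + K := by push_cast [hmdef]; ring
    have hm1 : (1:ℝ) ≤ α * m + c := by
      rw [hmc]
      nlinarith [Nat.cast_nonneg (α := ℝ) k, hα.le, hc]
    have hfac : (0:ℝ) < (m.factorial : ℝ) := by exact_mod_cast m.factorial_pos
    have hgamma : Real.exp (-(2*C)) * (C^α) ^ k * (m.factorial : ℝ) ≤
        Real.Gamma (α * m + c) * (m.factorial : ℝ) := by
      apply mul_le_mul_of_nonneg_right _ hfac.le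
      refine le_trans ?_ (gamma_lb C hC1 _ hm1)
      apply mul_le_mul_of_nonneg_left _ (Real.exp_pos _).le
      have he : C ^ (α * m + c - 1) = C ^ (α * (k:ℝ)) * C ^ (α*K + c - 1) := by
        rw [← Real.rpow_add hC0, hmc]; ring_nf
      have h1 : (C^α) ^ k = C ^ (α * (k:ℝ)) := by
        rw [Real.rpow_mul hC0.le, Real.rpow_natCast]
      have h2 : (1:ℝ) ≤ C ^ (α*K + c - 1) := by
        calc (1:ℝ) = C ^ (0:ℝ) := (Real.rpow_zero C).symm
          _ ≤ C ^ (α*K + c - 1) := Real.rpow_le_rpow_of_exponent_le hC1 (by linarith)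
      rw [he, h1]
      nlinarith [Real.rpow_pos_of_pos hC0 (α * (k:ℝ))]
    have hnum : |(ascPochhammer ℝ m).eval (-γ)| * A ^ m * (α * m + 2) ≤
        (Real.exp 1 * (Real.exp 1 * G) ^ m * m.factorial) * A ^ m * (α * m + 2) := by
      have hp := poch_fact_bound γ m
      apply mul_le_mul_of_nonneg_right _ (by rw [hmc]; positivity)
      exact mul_le_mul_of_nonneg_right hp (by positivity)
    have hden0 : (0:ℝ) < Real.exp (-(2*C)) * (C^α) ^ k * (m.factorial : ℝ) := by positivity
    have heq : (Real.exp 1 * (Real.exp 1 * G) ^ m * m.factorial) * A ^ m * (α * m + 2) /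
        (Real.exp (-(2*C)) * (C^α) ^ k * (m.factorial : ℝ)) =
        (Real.exp 1 * Real.exp (2*C) * B^K) * ((α * k + (α*K+2)) * q ^ k) := by
      have hBm : (Real.exp 1 * G) ^ m * A ^ m = B ^ k * B ^ K := by
        rw [← mul_pow, ← hBdef, hmdef, pow_add]
      have hq2 : q ^ k = B ^ k / (C^α) ^ k := by rw [hqdef, div_pow]
      rw [Real.exp_neg, hq2, hmc]
      field_simp
      rw [mul_comm] at hBm
      linear_combination (α*((k:ℝ)+(K:ℝ))+2) * hBm
    calc |(ascPochhammer ℝ m).eval (-γ)| * A ^ m * (α * m + 2) /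
          (Real.Gamma (α * m + c) * (m.factorial : ℝ))
        ≤ (Real.exp 1 * (Real.exp 1 * G) ^ m * m.factorial) * A ^ m * (α * m + 2) /
          (Real.exp (-(2*C)) * (C^α) ^ k * (m.factorial : ℝ)) := by
          apply div_le_div₀ (by rw [hmc]; positivity) hnum hden0 hgamma
      _ = _ := heq

noncomputable def dcoef (α γ δ c : ℝ) (k : ℕ) : ℝ :=
  (ascPochhammer ℝ k).eval (-γ) * δ ^ k / (Real.Gamma (α * k + c) * (k.factorial : ℝ))

lemma dcoef_abs (α γ δ c : ℝ) (hc : 0 < c) (hα : 0 ≤ α) (k : ℕ) :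
    |dcoef α γ δ c k| = |(ascPochhammer ℝ k).eval (-γ)| * |δ| ^ k /
      (Real.Gamma (α * k + c) * (k.factorial : ℝ)) := by
  have hΓ : 0 < Real.Gamma (α * k + c) :=
    Real.Gamma_pos_of_pos (by positivity)
  have hf : (0:ℝ) < (k.factorial : ℝ) := by exact_mod_cast k.factorial_pos
  rw [dcoef, abs_div, abs_mul, abs_pow, abs_mul, abs_of_pos hΓ, abs_of_pos hf]

lemma prabE_series (α γ δ c x : ℝ) (hx : 0 < x) (c' : ℝ) (hc' : c' = c - 1) :
    x ^ c' * prabE α c (-γ) (δ * x ^ α)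
      = ∑' k : ℕ, dcoef α γ δ c k * x ^ (α * k + c') := by
  rw [prabE, ← tsum_mul_left]
  apply tsum_congr
  intro k
  have h1 : (x ^ α) ^ k = x ^ (α * (k:ℝ)) := by
    rw [Real.rpow_mul hx.le, Real.rpow_natCast]
  have h2 : x ^ (α * (k:ℝ) + c') = x ^ (α * (k:ℝ)) * x ^ c' := Real.rpow_add hx _ _
  rw [dcoef, h2, mul_pow, h1]
  ring

lemma dcoef_succ (α γ δ c : ℝ) (k : ℕ) (h : 0 < α * k + c) :
    dcoef α γ δ (c+1) k * (α * k + c) = dcoef α γ δ c k := by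
  have he : α * k + (c+1) = (α * k + c) + 1 := by ring
  have hΓ := Real.Gamma_pos_of_pos h
  have hf : (0:ℝ) < (k.factorial : ℝ) := by exact_mod_cast k.factorial_pos
  rw [dcoef, dcoef, he, Real.Gamma_add_one h.ne']
  field_simp

private theorem part1 (α β γ δ : ℝ) (hα : 0 < α) (hβ : 0 < β) (hβ1 : β < 1)
    (t : ℝ) (ht : 0 < t) :
    HasDerivAt (fun s : ℝ => s ^ (1 - β) * prabE α (2 - β) (-γ) (δ * s ^ α))
      (t ^ (-β) * prabE α (1 - β) (-γ) (δ * t ^ α)) t := by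
  set A : ℝ := |δ| * (2*t) ^ α with hA
  have hA0 : 0 ≤ A := by positivity
  set g : ℕ → ℝ → ℝ := fun k y => dcoef α γ δ (2-β) k * y ^ (α * k + (1-β)) with hg
  set g' : ℕ → ℝ → ℝ :=
    fun k y => dcoef α γ δ (2-β) k * ((α * k + (1-β)) * y ^ (α * k + (1-β) - 1)) with hg'
  set u : ℕ → ℝ := fun k => (t/2) ^ (-β) * (|(ascPochhammer ℝ k).eval (-γ)| * A ^ k *
      (α * k + 2) / (Real.Gamma (α * k + (2-β)) * (k.factorial : ℝ))) with hu
  have husum : Summable u := (main_summable α γ hα (2-β) (by linarith) A hA0).mul_left _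
  have hbound : ∀ k : ℕ, ∀ y ∈ Ioo (t/2) (2*t), ‖g' k y‖ ≤ u k := by
    intro k y hy
    have hy0 : 0 < y := lt_trans (by linarith) hy.1
    have hΓ : 0 < Real.Gamma (α * k + (2-β)) := Real.Gamma_pos_of_pos (by have := Nat.cast_nonneg (α := ℝ) k; nlinarith)
    have hf : (0:ℝ) < (k.factorial : ℝ) := by exact_mod_cast k.factorial_pos
    have hyp : y ^ (α * k + (1-β) - 1) ≤ (2*t) ^ (α * (k:ℝ)) * (t/2) ^ (-β) := by
      have he : α * (k:ℝ) + (1-β) - 1 = α * k + (-β) := by ring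
      rw [he, Real.rpow_add hy0]
      apply mul_le_mul
      · exact Real.rpow_le_rpow hy0.le hy.2.le (by positivity)
      · rw [Real.rpow_neg hy0.le, Real.rpow_neg (by positivity : (0:ℝ) ≤ t/2)]
        apply inv_anti₀ (Real.rpow_pos_of_pos (by linarith) β)
        exact Real.rpow_le_rpow (by linarith) hy.1.le hβ.le
      · positivity
      · positivity
    have hyp0 : 0 ≤ y ^ (α * k + (1-β) - 1) := by positivity
    rw [hg', Real.norm_eq_abs, abs_mul, abs_mul,
      dcoef_abs α γ δ (2-β) (by linarith) hα.le,
      abs_of_pos (show (0:ℝ) < α * k + (1-β) by have := Nat.cast_nonneg (α := ℝ) k; nlinarith), abs_of_nonneg hyp0, hu]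
    have h2t : ((2*t) ^ α) ^ k = (2*t) ^ (α * (k:ℝ)) := by
      rw [Real.rpow_mul (by linarith), Real.rpow_natCast]
    calc |(ascPochhammer ℝ k).eval (-γ)| * |δ| ^ k / (Real.Gamma (α * k + (2-β)) * k.factorial) *
          ((α * k + (1-β)) * y ^ (α * k + (1-β) - 1))
        ≤ |(ascPochhammer ℝ k).eval (-γ)| * |δ| ^ k / (Real.Gamma (α * k + (2-β)) * k.factorial) *
          ((α * k + 2) * ((2*t) ^ (α * (k:ℝ)) * (t/2) ^ (-β))) := by
          apply mul_le_mul_of_nonneg_left _ (by positivity)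
          apply mul_le_mul (by linarith) hyp hyp0 (by positivity)
      _ = (t/2) ^ (-β) * (|(ascPochhammer ℝ k).eval (-γ)| * A ^ k *
          (α * k + 2) / (Real.Gamma (α * k + (2-β)) * (k.factorial : ℝ))) := by
          rw [hA, mul_pow, ← h2t]
          ring
  have hderiv : ∀ k : ℕ, ∀ y ∈ Ioo (t/2) (2*t), HasDerivAt (g k) (g' k y) y := by
    intro k y hy
    have hy0 : 0 < y := lt_trans (by linarith) hy.1
    exact (Real.hasDerivAt_rpow_const (Or.inl hy0.ne')).const_mul _
  have hg0 : Summable (fun k => g k t) := by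
    apply Summable.of_abs
    apply Summable.of_nonneg_of_le (fun k => abs_nonneg _) _
      ((main_summable α γ hα (2-β) (by linarith) A hA0).mul_left (t ^ (1-β)))
    intro k
    have hΓ : 0 < Real.Gamma (α * k + (2-β)) := Real.Gamma_pos_of_pos (by have := Nat.cast_nonneg (α := ℝ) k; nlinarith)
    have hf : (0:ℝ) < (k.factorial : ℝ) := by exact_mod_cast k.factorial_pos
    have htp : t ^ (α * k + (1-β)) ≤ (2*t) ^ (α * (k:ℝ)) * t ^ (1-β) := by
      rw [Real.rpow_add ht]
      apply mul_le_mul_of_nonneg_right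
        (Real.rpow_le_rpow ht.le (by linarith) (by positivity)) (by positivity)
    have h2t : ((2*t) ^ α) ^ k = (2*t) ^ (α * (k:ℝ)) := by
      rw [Real.rpow_mul (by linarith), Real.rpow_natCast]
    rw [hg, abs_mul, dcoef_abs α γ δ (2-β) (by linarith) hα.le,
      abs_of_nonneg (by positivity : (0:ℝ) ≤ t ^ (α * k + (1-β)))]
    calc |(ascPochhammer ℝ k).eval (-γ)| * |δ| ^ k / (Real.Gamma (α * k + (2-β)) * k.factorial) *
          t ^ (α * k + (1-β))
        ≤ |(ascPochhammer ℝ k).eval (-γ)| * |δ| ^ k / (Real.Gamma (α * k + (2-β)) * k.factorial) *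
          ((2*t) ^ (α * (k:ℝ)) * t ^ (1-β)) := by
          apply mul_le_mul_of_nonneg_left htp (by positivity)
      _ ≤ t ^ (1-β) * (|(ascPochhammer ℝ k).eval (-γ)| * A ^ k *
          (α * k + 2) / (Real.Gamma (α * k + (2-β)) * (k.factorial : ℝ))) := by
          rw [hA, mul_pow, ← h2t]
          have h1 : (1:ℝ) ≤ α * k + 2 := by
            have := Nat.cast_nonneg (α := ℝ) k; nlinarith
          have hnn : (0:ℝ) ≤ |(ascPochhammer ℝ k).eval (-γ)| * |δ| ^ k *
              ((2*t)^α)^k * t ^ (1-β) / (Real.Gamma (α * k + (2-β)) * k.factorial) := by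
            positivity
          calc |(ascPochhammer ℝ k).eval (-γ)| * |δ| ^ k /
                (Real.Gamma (α * k + (2-β)) * k.factorial) * (((2*t)^α)^k * t ^ (1-β))
              = (|(ascPochhammer ℝ k).eval (-γ)| * |δ| ^ k * ((2*t)^α)^k * t ^ (1-β) /
                (Real.Gamma (α * k + (2-β)) * k.factorial)) * 1 := by ring
            _ ≤ (|(ascPochhammer ℝ k).eval (-γ)| * |δ| ^ k * ((2*t)^α)^k * t ^ (1-β) /
                (Real.Gamma (α * k + (2-β)) * k.factorial)) * (α * k + 2) :=
                mul_le_mul_of_nonneg_left h1 hnn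
            _ = t ^ (1-β) * (|(ascPochhammer ℝ k).eval (-γ)| * (|δ|^k * ((2*t)^α)^k) *
                (α * k + 2) / (Real.Gamma (α * k + (2-β)) * (k.factorial : ℝ))) := by ring
  have hmem : t ∈ Ioo (t/2) (2*t) := ⟨by linarith, by linarith⟩
  have hmain : HasDerivAt (fun z => ∑' k, g k z) (∑' k, g' k t) t :=
    hasDerivAt_tsum_of_isPreconnected husum isOpen_Ioo (convex_Ioo _ _).isPreconnected
      hderiv hbound hmem hg0 hmem
  have heq1 : (fun s : ℝ => s ^ (1 - β) * prabE α (2 - β) (-γ) (δ * s ^ α))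
      =ᶠ[nhds t] (fun z => ∑' k, g k z) := by
    filter_upwards [Ioi_mem_nhds ht] with x hx
    exact prabE_series α γ δ (2-β) x hx (1-β) (by ring)
  have heq2 : (∑' k, g' k t) = t ^ (-β) * prabE α (1 - β) (-γ) (δ * t ^ α) := by
    rw [prabE_series α γ δ (1-β) t ht (-β) (by ring)]
    apply tsum_congr
    intro k
    have hp : 0 < α * k + (1-β) := by have := Nat.cast_nonneg (α := ℝ) k; nlinarith
    have hd := dcoef_succ α γ δ (1-β) k hp
    have h2 : (1-β) + 1 = 2 - β := by ring
    rw [h2] at hd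
    have he : α * (k:ℝ) + (1-β) - 1 = α * k + (-β) := by ring
    simp only [hg']
    rw [he, ← hd]
    ring
  rw [← heq2]
  exact hmain.congr_of_eventuallyEq heq1

private theorem part2 (α β γ δ : ℝ) (hα : 0 < α) (hβ : 0 < β) (hβ1 : β < 1)
    (t : ℝ) (ht : 0 < t) :
    HasDerivAt (fun r : ℝ =>
        ∫ s in (0:ℝ)..r, (r - s) ^ (-β) * prabE α (1 - β) (-γ) (δ * (r - s) ^ α))
      (t ^ (-β) * prabE α (1 - β) (-γ) (δ * t ^ α)) t := by
  have key : ∀ r : ℝ, 0 < r →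
      (∫ s in (0:ℝ)..r, (r - s) ^ (-β) * prabE α (1 - β) (-γ) (δ * (r - s) ^ α))
        = r ^ (1-β) * prabE α (2-β) (-γ) (δ * r ^ α) := by
    intro r hr
    have hsub : (∫ s in (0:ℝ)..r, (r - s) ^ (-β) * prabE α (1 - β) (-γ) (δ * (r - s) ^ α))
        = ∫ u in (0:ℝ)..r, u ^ (-β) * prabE α (1 - β) (-γ) (δ * u ^ α) := by
      have h := intervalIntegral.integral_comp_sub_left (a := 0) (b := r)
        (fun u : ℝ => u ^ (-β) * prabE α (1 - β) (-γ) (δ * u ^ α)) r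
      simpa using h
    rw [hsub, intervalIntegral.integral_of_le hr.le]
    set f : ℕ → ℝ → ℝ := fun k u => dcoef α γ δ (1-β) k * u ^ (α * k + (-β)) with hf
    have hek : ∀ k : ℕ, (-1:ℝ) < α * k + (-β) := by
      intro k
      have := Nat.cast_nonneg (α := ℝ) k
      nlinarith
    have hek2 : ∀ k : ℕ, (0:ℝ) < α * k + (-β) + 1 := by
      intro k; linarith [hek k]
    have hint : ∀ k : ℕ, IntegrableOn (f k) (Ioc 0 r) := by
      intro k
      have h := (intervalIntegral.intervalIntegrable_rpow' (a := 0) (b := r) (hek k)).1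
      exact h.const_mul _
    have hcongr : ∫ u in Ioc 0 r, u ^ (-β) * prabE α (1 - β) (-γ) (δ * u ^ α)
        = ∫ u in Ioc 0 r, (∑' k, f k u) := by
      apply setIntegral_congr_fun measurableSet_Ioc
      intro u hu
      exact prabE_series α γ δ (1-β) u hu.1 (-β) (by ring)
    have hval : ∀ k : ℕ, ∫ u in Ioc 0 r, u ^ (α * k + (-β))
        = r ^ (α * k + (-β) + 1) / (α * k + (-β) + 1) := by
      intro k
      rw [← intervalIntegral.integral_of_le hr.le,
        integral_rpow (Or.inl (hek k)),
        Real.zero_rpow (hek2 k).ne']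
      ring
    have hnormval : ∀ k : ℕ, ∫ u in Ioc 0 r, ‖f k u‖
        = |dcoef α γ δ (1-β) k| * (r ^ (α * k + (-β) + 1) / (α * k + (-β) + 1)) := by
      intro k
      have h1 : ∫ u in Ioc 0 r, ‖f k u‖
          = ∫ u in Ioc 0 r, |dcoef α γ δ (1-β) k| * u ^ (α * k + (-β)) := by
        apply setIntegral_congr_fun measurableSet_Ioc
        intro u hu
        rw [hf]
        beta_reduce
        rw [Real.norm_eq_abs, abs_mul,
          abs_of_nonneg (Real.rpow_nonneg hu.1.le _)]
      rw [h1, MeasureTheory.integral_const_mul, hval k]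
    have hsumnorm : Summable (fun k => ∫ u in Ioc 0 r, ‖f k u‖) := by
      set A : ℝ := |δ| * r ^ α with hA
      have hA0 : 0 ≤ A := by positivity
      apply Summable.of_nonneg_of_le
        (fun k => integral_nonneg (fun u => norm_nonneg _))
        _ ((main_summable α γ hα (1-β) (by linarith) A hA0).mul_left (r ^ (1-β) / (1-β)))
      intro k
      rw [hnormval k]
      have hΓ : 0 < Real.Gamma (α * k + (1-β)) :=
        Real.Gamma_pos_of_pos (by have := Nat.cast_nonneg (α := ℝ) k; nlinarith)
      have hfp : (0:ℝ) < (k.factorial : ℝ) := by exact_mod_cast k.factorial_pos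
      have hrp : r ^ (α * k + (-β) + 1) = (r^α)^k * r ^ (1-β) := by
        rw [← Real.rpow_natCast (r^α) k, ← Real.rpow_mul hr.le, ← Real.rpow_add hr]
        ring_nf
      have hb1 : (1:ℝ) - β ≤ α * k + (-β) + 1 := by
        have := Nat.cast_nonneg (α := ℝ) k; nlinarith
      have hb2 : (1:ℝ) ≤ α * k + 2 := by
        have := Nat.cast_nonneg (α := ℝ) k; nlinarith
      rw [dcoef_abs α γ δ (1-β) (by linarith) hα.le, hrp]
      have hnn : (0:ℝ) ≤ |(ascPochhammer ℝ k).eval (-γ)| * |δ| ^ k * (r^α)^k * r ^ (1-β) /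
          (Real.Gamma (α * k + (1-β)) * k.factorial) := by positivity
      calc |(ascPochhammer ℝ k).eval (-γ)| * |δ| ^ k /
            (Real.Gamma (α * k + (1-β)) * k.factorial) *
            ((r^α)^k * r ^ (1-β) / (α * k + (-β) + 1))
          ≤ |(ascPochhammer ℝ k).eval (-γ)| * |δ| ^ k /
            (Real.Gamma (α * k + (1-β)) * k.factorial) *
            ((r^α)^k * r ^ (1-β) / (1 - β)) := by
            apply mul_le_mul_of_nonneg_left _ (by positivity)
            apply div_le_div_of_nonneg_left (by positivity) (by linarith) hb1
        _ = (|(ascPochhammer ℝ k).eval (-γ)| * |δ| ^ k * (r^α)^k * r ^ (1-β) /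
              (Real.Gamma (α * k + (1-β)) * k.factorial)) * (1-β)⁻¹ * 1 := by ring
        _ ≤ (|(ascPochhammer ℝ k).eval (-γ)| * |δ| ^ k * (r^α)^k * r ^ (1-β) /
              (Real.Gamma (α * k + (1-β)) * k.factorial)) * (1-β)⁻¹ * (α * k + 2) := by
            apply mul_le_mul_of_nonneg_left hb2 (mul_nonneg hnn (inv_nonneg.2 (by linarith)))
        _ = r ^ (1-β) / (1-β) * (|(ascPochhammer ℝ k).eval (-γ)| * A ^ k *
              (α * k + 2) / (Real.Gamma (α * k + (1-β)) * (k.factorial : ℝ))) := by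
            rw [hA, mul_pow]; ring
    rw [hcongr, ← MeasureTheory.integral_tsum_of_summable_integral_norm hint hsumnorm,
      prabE_series α γ δ (2-β) r hr (1-β) (by ring)]
    apply tsum_congr
    intro k
    have hp : 0 < α * k + (1-β) := by have := Nat.cast_nonneg (α := ℝ) k; nlinarith
    have hd := dcoef_succ α γ δ (1-β) k hp
    have h2 : (1-β) + 1 = 2 - β := by ring
    rw [h2] at hd
    rw [hf]
    beta_reduce
    rw [MeasureTheory.integral_const_mul, hval k]
    have he : α * (k:ℝ) + (-β) + 1 = α * k + (1-β) := by ring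
    rw [he]
    rw [eq_comm, ← hd]
    field_simp [hp.ne']
  have heq : (fun r : ℝ =>
      ∫ s in (0:ℝ)..r, (r - s) ^ (-β) * prabE α (1 - β) (-γ) (δ * (r - s) ^ α))
      =ᶠ[nhds t] (fun s : ℝ => s ^ (1 - β) * prabE α (2 - β) (-γ) (δ * s ^ α)) := by
    filter_upwards [Ioi_mem_nhds ht] with x hx
    exact key x hx
  exact (part1 α β γ δ hα hβ hβ1 t ht).congr_of_eventuallyEq heq

end PrabhakarAux

/-- For `α > 0`, `0 < β < 1` and `t > 0`, the function
`s ↦ s^{1−β} E_{α,2−β}^{−γ}(δ s^α)` is differentiable at `t` with derivative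
`t^{−β} E_{α,1−β}^{−γ}(δ t^α)`; consequently the Riemann–Liouville-type Prabhakar
derivative of the constant function `1`, namely
`d/dt ∫₀ᵗ (t−s)^{−β} E_{α,1−β}^{−γ}(δ(t−s)^α) ds`, equals
`t^{−β} E_{α,1−β}^{−γ}(δ t^α)` for `t > 0`. -/
theorem prabhakar_deriv_of_one (α β γ δ : ℝ) (hα : 0 < α) (hβ : 0 < β) (hβ1 : β < 1)
    (t : ℝ) (ht : 0 < t) :
    HasDerivAt (fun s : ℝ => s ^ (1 - β) * prabE α (2 - β) (-γ) (δ * s ^ α))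
      (t ^ (-β) * prabE α (1 - β) (-γ) (δ * t ^ α)) t ∧
    HasDerivAt (fun r : ℝ =>
        ∫ s in (0:ℝ)..r, (r - s) ^ (-β) * prabE α (1 - β) (-γ) (δ * (r - s) ^ α))
      (t ^ (-β) * prabE α (1 - β) (-γ) (δ * t ^ α)) t :=
  ⟨part1 α β γ δ hα hβ hβ1 t ht, part2 α β γ δ hα hβ hβ1 t ht⟩
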